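/- Let f be continuous on the closed unit disk and holomorphic on the open unit disk (i.e. f is in the disk algebra), with f(ζ) ≠ 0 for all ζ ∈ 𝕋. If the winding number about 0 of the boundary restriction f|_𝕋 is 0, then f(z) ≠ 0 for all z in the open unit disk 𝔻. -/

import Mathlib

open Complex Metric Set Real

/-- `g` (viewed as a loop `t ↦ g (exp (i t))`) has winding number `n` about the origin. -/
def HasWindingNumber (g : ℂ → ℂ) (n : ℤ) : Prop :=
  ∃ θ : ℝ → ℝ, Continuous θ ∧
    (∀ t : ℝ, g (Complex.exp (t * Complex.I)) =
      (‖g (Complex.exp (t * Complex.I))‖ : ℂ) *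
        Complex.exp (θ t * Complex.I)) ∧
    θ (2 * Real.pi) - θ 0 = 2 * Real.pi * n

local notation "𝕖" t:max => Complex.exp ((t : ℂ) * Complex.I)


lemma exp_two_pi_eq : Complex.exp ((2 * Real.pi : ℝ) * Complex.I) = Complex.exp ((0:ℝ) * Complex.I) := by
  push_cast
  rw [Complex.exp_two_pi_mul_I]
  simp

lemma winding_congr {g h : ℂ → ℂ} {n : ℤ}
    (hgh : ∀ t : ℝ, g (Complex.exp (t * Complex.I)) = h (Complex.exp (t * Complex.I)))
    (hg : HasWindingNumber g n) : HasWindingNumber h n := by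
  obtain ⟨θ, hθc, hθ, hθd⟩ := hg
  exact ⟨θ, hθc, fun t => by rw [← hgh t]; exact hθ t, hθd⟩

lemma winding_mul {g h : ℂ → ℂ} {m n : ℤ} (hg : HasWindingNumber g m)
    (hh : HasWindingNumber h n) :
    HasWindingNumber (fun z => g z * h z) (m + n) := by
  obtain ⟨θ₁, h1c, h1, h1d⟩ := hg
  obtain ⟨θ₂, h2c, h2, h2d⟩ := hh
  refine ⟨fun t => θ₁ t + θ₂ t, h1c.add h2c, fun t => ?_, ?_⟩
  · simp only [norm_mul]
    push_cast
    conv_lhs => rw [h1 t, h2 t]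
    rw [add_mul, Complex.exp_add]
    ring
  · rw [show ∀ a b c d : ℝ, a + b - (c + d) = (a - c) + (b - d) by intros; ring]
    rw [h1d, h2d]
    push_cast
    ring

lemma winding_const (c : ℂ) : HasWindingNumber (fun _ => c) 0 := by
  refine ⟨fun _ => Complex.arg c, continuous_const, fun t => ?_, by simp⟩
  exact (Complex.norm_mul_exp_arg_mul_I c).symm

lemma delta_const (δ : ℝ → ℝ) (hδ : Continuous δ)
    (key : ∀ t : ℝ, ∃ k : ℤ, δ t = 2 * π * k) (a b : ℝ) : δ a = δ b := by
  by_contra hne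
  obtain ⟨ka, hka⟩ := key a
  obtain ⟨kb, hkb⟩ := key b
  have hkk : ka ≠ kb := by
    rintro rfl
    exact hne (hka.trans hkb.symm)
  have hc : ∃ c, c ∈ Set.uIcc (δ a) (δ b) ∧ ∀ k' : ℤ, c ≠ 2 * π * k' := by
    have parity : ∀ k k' : ℤ, 2 * π * (k:ℝ) - π ≠ 2 * π * k' := by
      intro k k' h
      have hπ : π * ((2*k - 1 - 2*k' : ℤ) : ℝ) = 0 := by push_cast; ring_nf; linarith
      have := mul_eq_zero.1 hπ
      rcases this with h' | h'
      · exact Real.pi_ne_zero h'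
      · have : (2*k - 1 - 2*k' : ℤ) = 0 := by exact_mod_cast h'
        omega
    rcases lt_or_gt_of_ne hkk with h | h
    · refine ⟨2 * π * kb - π, ?_, parity kb⟩
      rw [Set.mem_uIcc]
      left
      rw [hka, hkb]
      have h1 : (ka:ℝ) + 1 ≤ kb := by exact_mod_cast h
      constructor <;> nlinarith [Real.pi_pos]
    · refine ⟨2 * π * ka - π, ?_, parity ka⟩
      rw [Set.mem_uIcc]
      right
      rw [hka, hkb]
      have h1 : (kb:ℝ) + 1 ≤ ka := by exact_mod_cast h
      constructor <;> nlinarith [Real.pi_pos]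
  obtain ⟨c, hmem, hnot⟩ := hc
  obtain ⟨s, _, hs⟩ := intermediate_value_uIcc hδ.continuousOn hmem
  obtain ⟨k', hk'⟩ := key s
  exact hnot k' (hs ▸ hk')

lemma winding_unique {g : ℂ → ℂ} {m n : ℤ}
    (hg : ∀ t : ℝ, g (Complex.exp (t * Complex.I)) ≠ 0)
    (h1 : HasWindingNumber g m) (h2 : HasWindingNumber g n) : m = n := by
  obtain ⟨θ₁, h1c, h1e, h1d⟩ := h1
  obtain ⟨θ₂, h2c, h2e, h2d⟩ := h2
  have key : ∀ t : ℝ, ∃ k : ℤ, θ₁ t - θ₂ t = 2 * π * k := by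
    intro t
    have habs : (‖g (Complex.exp (t * Complex.I))‖ : ℂ) ≠ 0 := by
      simpa using hg t
    have h3 : Complex.exp (θ₁ t * Complex.I) = Complex.exp (θ₂ t * Complex.I) :=
      mul_left_cancel₀ habs ((h1e t).symm.trans (h2e t))
    obtain ⟨k, hk⟩ := Complex.exp_eq_exp_iff_exists_int.1 h3
    refine ⟨k, ?_⟩
    have him := congrArg Complex.im hk
    simp [Complex.mul_im, Complex.mul_re] at him
    linarith
  have hd := delta_const (fun t => θ₁ t - θ₂ t) (h1c.sub h2c) key (2 * π) 0
  have hmn : 2 * π * (m:ℝ) = 2 * π * n := by linarith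
  have := Real.pi_ne_zero
  field_simp at hmn
  exact_mod_cast hmn

lemma slit_helper {v : ℂ} (hv : ‖v‖ < 1) : (1 - v) ∈ Complex.slitPlane := by
  rw [Complex.mem_slitPlane_iff]
  left
  have h1 : |v.re| ≤ ‖v‖ := Complex.abs_re_le_norm v
  have h2 := abs_le.1 h1
  simp only [Complex.sub_re, Complex.one_re]
  linarith

lemma slit_ne_zero {v : ℂ} (hv : ‖v‖ < 1) : (1 - v) ≠ 0 :=
  Complex.slitPlane_ne_zero (slit_helper hv)

lemma winding_sub_inside {a : ℂ} (ha : ‖a‖ < 1) :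
    HasWindingNumber (fun z => z - a) 1 := by
  set w : ℝ → ℂ := fun t => 1 - a * Complex.exp (((-t : ℝ) : ℂ) * Complex.I) with hw
  have habs : ∀ t : ℝ, ‖a * Complex.exp (((-t : ℝ) : ℂ) * Complex.I)‖ < 1 := by
    intro t
    rw [norm_mul, Complex.norm_exp_ofReal_mul_I, mul_one]
    exact ha
  have hwslit : ∀ t : ℝ, w t ∈ Complex.slitPlane := fun t => slit_helper (habs t)
  have hwne : ∀ t : ℝ, w t ≠ 0 := fun t => slit_ne_zero (habs t)
  have hwc : Continuous w := by
    apply continuous_const.sub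
    apply continuous_const.mul
    apply Complex.continuous_exp.comp
    exact (Complex.continuous_ofReal.comp continuous_neg).mul continuous_const
  have hkey : ∀ t : ℝ, Complex.exp ((t:ℝ) * Complex.I) * w t
      = Complex.exp ((t:ℝ) * Complex.I) - a := by
    intro t
    rw [hw]
    simp only
    rw [mul_sub, mul_one, ← mul_assoc, mul_comm (Complex.exp _) a, mul_assoc,
      ← Complex.exp_add]
    push_cast
    ring_nf
    simp
  refine ⟨fun t => t + Complex.arg (w t), ?_, ?_, ?_⟩
  · exact continuous_id.add (by
      apply continuous_iff_continuousAt.2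
      intro t
      exact (Complex.continuousAt_arg (hwslit t)).comp hwc.continuousAt)
  · intro t
    simp only
    have h1 : ‖Complex.exp ((t:ℝ) * Complex.I) - a‖ = ‖w t‖ := by
      rw [← hkey t, norm_mul, Complex.norm_exp_ofReal_mul_I, one_mul]
    rw [h1]
    push_cast
    rw [add_mul, Complex.exp_add, ← hkey t, mul_left_comm,
      Complex.norm_mul_exp_arg_mul_I]
  · have e1 : ((-(2*π):ℝ) : ℂ) * Complex.I = -(2*(π:ℂ)*Complex.I) := by push_cast; ring
    have hw20 : w (2*π) = w 0 := by
      rw [hw]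
      simp only
      rw [e1, Complex.exp_neg, Complex.exp_two_pi_mul_I]
      norm_num
    simp only [hw20]
    push_cast
    ring

lemma winding_sub_outside {a : ℂ} (ha : 1 < ‖a‖) :
    HasWindingNumber (fun z => z - a) 0 := by
  have ha0 : a ≠ 0 := by
    intro h; rw [h] at ha; simp at ha; linarith
  set w : ℝ → ℂ := fun t => 1 - Complex.exp ((t : ℂ) * Complex.I) / a with hw
  have habs : ∀ t : ℝ, ‖Complex.exp (((t:ℝ) : ℂ) * Complex.I) / a‖ < 1 := by
    intro t
    rw [norm_div, Complex.norm_exp_ofReal_mul_I]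
    rw [div_lt_one (by linarith)]
    exact ha
  have hwslit : ∀ t : ℝ, w t ∈ Complex.slitPlane := fun t => slit_helper (habs t)
  have hwne : ∀ t : ℝ, w t ≠ 0 := fun t => slit_ne_zero (habs t)
  have hwc : Continuous w := by
    apply continuous_const.sub
    apply Continuous.div_const
    exact Complex.continuous_exp.comp (Complex.continuous_ofReal.mul continuous_const)
  have hkey : ∀ t : ℝ, (-a) * w t = Complex.exp ((t:ℝ) * Complex.I) - a := by
    intro t
    rw [hw]
    simp only
    field_simp
    ring
  refine ⟨fun t => Complex.arg (-a) + Complex.arg (w t), ?_, ?_, ?_⟩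
  · exact continuous_const.add (by
      apply continuous_iff_continuousAt.2
      intro t
      exact (Complex.continuousAt_arg (hwslit t)).comp hwc.continuousAt)
  · intro t
    simp only
    have h1 : ‖Complex.exp ((t:ℝ) * Complex.I) - a‖
        = ‖-a‖ * ‖w t‖ := by
      rw [← hkey t, norm_mul]
    rw [h1]
    push_cast
    rw [add_mul, Complex.exp_add, ← hkey t]
    rw [show ((‖-a‖ : ℂ) * (‖w t‖ : ℂ)) *
        (Complex.exp ((Complex.arg (-a) :ℂ) * Complex.I) * Complex.exp ((Complex.arg (w t) : ℂ) * Complex.I))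
      = ((‖-a‖ : ℂ) * Complex.exp ((Complex.arg (-a) :ℂ) * Complex.I)) *
        ((‖w t‖ : ℂ) * Complex.exp ((Complex.arg (w t) : ℂ) * Complex.I)) from by ring]
    rw [Complex.norm_mul_exp_arg_mul_I, Complex.norm_mul_exp_arg_mul_I]
  · have hw20 : w (2*π) = w 0 := by
      rw [hw]
      simp only
      have h2 : Complex.exp (((2*π:ℝ):ℂ) * Complex.I) = Complex.exp (((0:ℝ):ℂ) * Complex.I) := by
        push_cast
        rw [Complex.exp_two_pi_mul_I]
        simp
      rw [h2]
    simp only [hw20]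
    push_cast
    ring

lemma exp_eq_div {z : ℂ} {s : ℝ} (hz : z ≠ 0)
    (h : z = (‖z‖ : ℂ) * Complex.exp ((s:ℂ) * Complex.I)) :
    Complex.exp ((s:ℂ) * Complex.I) = z / (‖z‖ : ℂ) := by
  have habs : (‖z‖ : ℂ) ≠ 0 := by simpa using hz
  field_simp
  rw [mul_comm]
  exact h.symm

lemma winding_perturb {g h : ℂ → ℂ} {n : ℤ}
    (hgc : Continuous fun t : ℝ => g (𝕖 t))
    (hhc : Continuous fun t : ℝ => h (𝕖 t))
    (hlt : ∀ t : ℝ, ‖g (𝕖 t) - h (𝕖 t)‖ < ‖h (𝕖 t)‖)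
    (hh : HasWindingNumber h n) : HasWindingNumber g n := by
  obtain ⟨θ, hθc, hθe, hθd⟩ := hh
  have hHne : ∀ t : ℝ, h (𝕖 t) ≠ 0 := by
    intro t hz
    have h1 := hlt t
    rw [hz] at h1
    simp only [sub_zero, norm_zero] at h1
    linarith [norm_nonneg (g (𝕖 t))]
  have hGne : ∀ t : ℝ, g (𝕖 t) ≠ 0 := by
    intro t hz
    have h1 := hlt t
    rw [hz, zero_sub] at h1
    simp only [norm_neg] at h1
    linarith
  have hq1 : ∀ t : ℝ, ‖1 - g (𝕖 t) / h (𝕖 t)‖ < 1 := by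
    intro t
    have hH := norm_pos_iff.mpr (hHne t)
    have e : 1 - g (𝕖 t) / h (𝕖 t) = (h (𝕖 t) - g (𝕖 t)) / h (𝕖 t) := by
      rw [sub_div, div_self (hHne t)]
    rw [e, norm_div, div_lt_one hH, norm_sub_rev]
    exact hlt t
  have hqslit : ∀ t : ℝ, g (𝕖 t) / h (𝕖 t) ∈ Complex.slitPlane := by
    intro t
    have := slit_helper (hq1 t)
    simpa using this
  have hqne : ∀ t : ℝ, g (𝕖 t) / h (𝕖 t) ≠ 0 := fun t => div_ne_zero (hGne t) (hHne t)
  have hqc : Continuous fun t : ℝ => g (𝕖 t) / h (𝕖 t) := hgc.div hhc hHne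
  refine ⟨fun t => θ t + Complex.arg (g (𝕖 t) / h (𝕖 t)), ?_, ?_, ?_⟩
  · exact hθc.add (by
      apply continuous_iff_continuousAt.2
      intro t
      exact ContinuousAt.comp (g := Complex.arg)
        (Complex.continuousAt_arg (hqslit t)) hqc.continuousAt)
  · intro t
    simp only
    have habsH : (‖h (𝕖 t)‖ : ℂ) ≠ 0 := by
      simpa using hHne t
    have habsq : (‖g (𝕖 t) / h (𝕖 t)‖ : ℂ) ≠ 0 := by
      simpa using hqne t
    push_cast
    rw [add_mul, Complex.exp_add]
    have hGq : g (𝕖 t) = (g (𝕖 t) / h (𝕖 t)) * h (𝕖 t) := by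
      rw [div_mul_cancel₀ _ (hHne t)]
    have habs_eq : ((‖g (𝕖 t) / h (𝕖 t)‖ : ℂ)) * (‖h (𝕖 t)‖ : ℂ)
        = (‖g (𝕖 t)‖ : ℂ) := by
      rw [← Complex.ofReal_mul]
      congr 1
      rw [norm_div, div_mul_cancel₀ _ (norm_ne_zero_iff.mpr (hHne t))]
    calc g (𝕖 t) = (g (𝕖 t) / h (𝕖 t)) * h (𝕖 t) := hGq
      _ = ((‖g (𝕖 t) / h (𝕖 t)‖ : ℂ) * Complex.exp ((Complex.arg (g (𝕖 t) / h (𝕖 t)) : ℂ) * Complex.I))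
          * ((‖h (𝕖 t)‖ : ℂ) * Complex.exp ((θ t : ℂ) * Complex.I)) := by
        rw [Complex.norm_mul_exp_arg_mul_I, ← hθe t]
      _ = ((‖g (𝕖 t) / h (𝕖 t)‖ : ℂ) * (‖h (𝕖 t)‖ : ℂ))
          * (Complex.exp ((θ t : ℂ) * Complex.I) * Complex.exp ((Complex.arg (g (𝕖 t) / h (𝕖 t)) : ℂ) * Complex.I)) := by
        ring
      _ = (‖g (𝕖 t)‖ : ℂ)
          * (Complex.exp ((θ t : ℂ) * Complex.I) * Complex.exp ((Complex.arg (g (𝕖 t) / h (𝕖 t)) : ℂ) * Complex.I)) := by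
        rw [habs_eq]
  · have hE2 : Complex.exp (((2 * π : ℝ) : ℂ) * Complex.I) = Complex.exp (((0 : ℝ) : ℂ) * Complex.I) := by
      push_cast
      rw [Complex.exp_two_pi_mul_I]
      simp
    simp only [hE2]
    linarith [hθd]

lemma winding_prod (c : ℂ) (M : Multiset ℂ) (hM : ∀ a ∈ M, ‖a‖ ≠ 1) :
    HasWindingNumber (fun z => c * (M.map (fun a => z - a)).prod)
      ((M.filter (fun a => ‖a‖ < 1)).card : ℤ) := by
  induction M using Multiset.induction_on with
  | empty => simpa using winding_const c
  | cons a M ih =>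
    have ha : ‖a‖ ≠ 1 := hM a (Multiset.mem_cons_self a M)
    have hM' : ∀ b ∈ M, ‖b‖ ≠ 1 := fun b hb => hM b (Multiset.mem_cons_of_mem hb)
    have hone : HasWindingNumber (fun z => z - a) (if ‖a‖ < 1 then 1 else 0) := by
      rcases lt_or_gt_of_ne ha with h | h
      · simpa [if_pos h] using winding_sub_inside h
      · rw [if_neg (not_lt.2 h.le)]
        exact winding_sub_outside h
    have hmul := winding_mul hone (ih hM')
    have hfun : ∀ t : ℝ, (Complex.exp ((t:ℝ) * Complex.I) - a) *
        (c * (M.map (fun b => Complex.exp ((t:ℝ) * Complex.I) - b)).prod)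
        = c * ((a ::ₘ M).map (fun b => Complex.exp ((t:ℝ) * Complex.I) - b)).prod := by
      intro t
      rw [Multiset.map_cons, Multiset.prod_cons]
      ring
    have hn : (if ‖a‖ < 1 then (1:ℤ) else 0)
        + ((M.filter (fun b => ‖b‖ < 1)).card : ℤ)
        = (((a ::ₘ M).filter (fun b => ‖b‖ < 1)).card : ℤ) := by
      rw [Multiset.filter_cons]
      split_ifs with h <;> simp <;> omega
    rw [← hn]
    exact winding_congr hfun hmul

theorem stmt_6 (f : ℂ → ℂ)
    (hc : ContinuousOn f (closedBall (0:ℂ) 1))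
    (hd : DifferentiableOn ℂ f (ball (0:ℂ) 1))
    (hnz : ∀ ζ : ℂ, ‖ζ‖ = 1 → f ζ ≠ 0)
    (hw : HasWindingNumber f 0) :
    ∀ z ∈ ball (0:ℂ) 1, f z ≠ 0 := by
  intro z₀ hz₀ hfz
  have hz₀1 : ‖z₀‖ < 1 := by simpa using mem_ball_zero_iff.1 hz₀
  -- minimum of |f| on the unit circle
  obtain ⟨ζ₀, hζ₀s, hζ₀min⟩ := (isCompact_sphere (0:ℂ) 1).exists_isMinOn
    ⟨1, by simp⟩ (continuous_norm.comp_continuousOn (hc.mono sphere_subset_closedBall))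
  set m := ‖f ζ₀‖ with hm
  have hmpos : 0 < m := by
    apply norm_pos_iff.mpr
    apply hnz
    simpa using mem_sphere_zero_iff_norm.1 hζ₀s
  have hfm : ∀ z ∈ sphere (0:ℂ) 1, m ≤ ‖f z‖ := fun z hz =>
    isMinOn_iff.1 hζ₀min z hz
  -- uniform continuity on the closed ball
  have huc := (isCompact_closedBall (0:ℂ) 1).uniformContinuousOn_of_continuous hc
  rw [Metric.uniformContinuousOn_iff] at huc
  obtain ⟨δ, hδpos, hδ⟩ := huc (m/4) (by positivity)
  -- choose dilation parameter ρ
  have hb1 : max (‖z₀‖) (1 - δ) < 1 := max_lt hz₀1 (by linarith)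
  obtain ⟨ρ, hbρ, hρ1⟩ := exists_between hb1
  have hρz₀ : ‖z₀‖ < ρ := lt_of_le_of_lt (le_max_left _ _) hbρ
  have hρδ : 1 - δ < ρ := lt_of_le_of_lt (le_max_right _ _) hbρ
  have hρ0 : 0 < ρ := lt_of_le_of_lt (norm_nonneg z₀) hρz₀
  set F : ℂ → ℂ := fun z => f ((ρ:ℂ) * z) with hF
  -- F is uniformly close to f on the closed ball
  have hclose : ∀ z ∈ closedBall (0:ℂ) 1, ‖F z - f z‖ < m/4 := by
    intro z hz
    have hz1 : ‖z‖ ≤ 1 := by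
      simpa using mem_closedBall_zero_iff.1 hz
    have h1 : (ρ:ℂ) * z ∈ closedBall (0:ℂ) 1 := by
      rw [mem_closedBall_zero_iff]
      simp only [norm_mul, Complex.norm_real, Real.norm_eq_abs]
      rw [abs_of_pos hρ0]
      nlinarith
    have hdist : dist ((ρ:ℂ) * z) z < δ := by
      rw [Complex.dist_eq]
      have e : (ρ:ℂ) * z - z = ((ρ - 1 : ℝ) : ℂ) * z := by push_cast; ring
      rw [e, norm_mul, Complex.norm_real, Real.norm_eq_abs, abs_of_neg (by linarith : ρ - 1 < 0)]
      nlinarith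
    have := hδ _ h1 _ hz hdist
    rw [Complex.dist_eq] at this
    exact this
  -- loop continuity facts
  have hEcont : Continuous fun t : ℝ => (𝕖 t) :=
    Complex.continuous_exp.comp (Complex.continuous_ofReal.mul continuous_const)
  have hEmem : ∀ t : ℝ, (𝕖 t) ∈ sphere (0:ℂ) 1 := by
    intro t
    rw [mem_sphere_zero_iff_norm, Complex.norm_exp_ofReal_mul_I]
  have hloopf : Continuous fun t : ℝ => f (𝕖 t) :=
    hc.comp_continuous hEcont fun t => sphere_subset_closedBall (hEmem t)
  have hloopF : Continuous fun t : ℝ => F (𝕖 t) := by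
    apply hc.comp_continuous (continuous_const.mul hEcont)
    intro t
    rw [mem_closedBall_zero_iff]
    show ‖(ρ:ℂ) * (𝕖 t)‖ ≤ 1
    simp only [norm_mul, Complex.norm_real, Real.norm_eq_abs, Complex.norm_exp_ofReal_mul_I]
    rw [abs_of_pos hρ0]
    linarith
  have hfml : ∀ t : ℝ, m ≤ ‖f (𝕖 t)‖ := fun t => hfm _ (hEmem t)
  -- winding of F is 0
  have hwF : HasWindingNumber F 0 := by
    apply winding_perturb hloopF hloopf _ hw
    intro t
    have h1 := hclose _ (sphere_subset_closedBall (hEmem t))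
    have h2 := hfml t
    linarith
  -- |F| ≥ 3m/4 on the sphere
  have hFms : ∀ z ∈ sphere (0:ℂ) 1, 3*(m/4) ≤ ‖F z‖ := by
    intro z hz
    have h1 := hclose z (sphere_subset_closedBall hz)
    have h2 := hfm z hz
    have h3 := norm_sub_norm_le (f z) (F z)
    rw [norm_sub_rev] at h3
    linarith
  -- power series of F
  have hFdiff : DifferentiableOn ℂ F (ball (0:ℂ) (1/ρ)) := by
    apply DifferentiableOn.comp hd
    · exact ((differentiable_id.const_mul ((ρ:ℂ))).differentiableOn)
    · intro z hz
      rw [mem_ball_zero_iff] at hz ⊢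
      simp only [norm_mul, Complex.norm_real, Real.norm_eq_abs]
      rw [abs_of_pos hρ0]
      calc ρ * ‖z‖ < ρ * (1/ρ) := by
            apply mul_lt_mul_of_pos_left _ hρ0
            simpa using hz
        _ = 1 := by field_simp
  obtain ⟨R, hR1, hRρ⟩ := exists_between (one_lt_one_div hρ0 hρ1)
  have hRpos : (0:ℝ) < R := by linarith
  have hFdiff' : DifferentiableOn ℂ F (closedBall (0:ℂ) (R.toNNReal : ℝ)) := by
    apply hFdiff.mono
    intro z hz
    rw [mem_closedBall_zero_iff] at hz
    rw [mem_ball_zero_iff]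
    calc ‖z‖ ≤ (R.toNNReal : ℝ) := hz
      _ = R := by rw [Real.coe_toNNReal _ hRpos.le]
      _ < 1/ρ := hRρ
  have hps := hFdiff'.hasFPowerSeriesOnBall (Real.toNNReal_pos.2 hRpos)
  set p := cauchyPowerSeries F 0 R.toNNReal with hp
  obtain ⟨r', hr1', hr'R⟩ := exists_between hR1
  have hr'pos : (0:ℝ) < r' := by linarith
  have htu := hps.tendstoUniformlyOn
    (show (r'.toNNReal : ENNReal) < (R.toNNReal : ENNReal) by
      rw [ENNReal.coe_lt_coe]
      exact_mod_cast (Real.toNNReal_lt_toNNReal_iff hRpos).2 hr'R)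
  rw [Metric.tendstoUniformlyOn_iff] at htu
  obtain ⟨N, hN⟩ := (htu (m/8) (by positivity)).exists
  have hball1 : closedBall (0:ℂ) 1 ⊆ Metric.ball (0:ℂ) (r'.toNNReal : ℝ) := by
    apply closedBall_subset_ball
    rw [Real.coe_toNNReal _ hr'pos.le]
    exact hr1'
  have hPa : ∀ z ∈ closedBall (0:ℂ) 1, ‖p.partialSum N z - F z‖ < m/8 := by
    intro z hz
    have := hN z (hball1 hz)
    rw [zero_add, dist_comm, Complex.dist_eq] at this
    exact this
  -- the approximating polynomial
  set P : Polynomial ℂ := ∑ k ∈ Finset.range N, Polynomial.C (p.coeff k) * Polynomial.X ^ k with hPdef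
  have hPeval : ∀ z : ℂ, P.eval z = p.partialSum N z := by
    intro z
    rw [hPdef, Polynomial.eval_finset_sum]
    unfold FormalMultilinearSeries.partialSum
    apply Finset.sum_congr rfl
    intro k _
    rw [FormalMultilinearSeries.apply_eq_pow_smul_coeff, smul_eq_mul,
      Polynomial.eval_mul, Polynomial.eval_C, Polynomial.eval_pow, Polynomial.eval_X, mul_comm]
  set a := z₀ / (ρ:ℂ) with ha
  have hρC : (ρ:ℂ) ≠ 0 := by
    simpa using hρ0.ne'
  have ha1 : ‖a‖ < 1 := by
    rw [ha, norm_div, Complex.norm_real, Real.norm_eq_abs, abs_of_pos hρ0, div_lt_one hρ0]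
    exact hρz₀
  have haball : a ∈ closedBall (0:ℂ) 1 := by
    rw [mem_closedBall_zero_iff]
    exact ha1.le
  have hFa : F a = 0 := by
    rw [hF]
    simp only
    rw [ha, mul_div_cancel₀ _ hρC]
    exact hfz
  set Q : ℂ → ℂ := fun z => P.eval z - P.eval a with hQ
  have hQclose : ∀ z ∈ closedBall (0:ℂ) 1, ‖Q z - F z‖ < m/4 := by
    intro z hz
    have h1 := hPa z hz
    have h2 := hPa a haball
    have e : Q z - F z = (P.eval z - F z) - (P.eval a - F a) := by
      simp only [hQ]
      rw [hFa]
      ring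
    rw [e, hPeval z, hPeval a, hFa, sub_zero]
    have h3 := norm_sub_le (p.partialSum N z - F z) (p.partialSum N a)
    rw [hFa, sub_zero] at h2
    linarith
  have hloopQ : Continuous fun t : ℝ => Q (𝕖 t) := by
    apply Continuous.sub _ continuous_const
    exact (Polynomial.continuous P).comp hEcont
  have hwQ : HasWindingNumber Q 0 := by
    apply winding_perturb hloopQ hloopF _ hwF
    intro t
    have h1 := hQclose _ (sphere_subset_closedBall (hEmem t))
    have h2 := hFms _ (hEmem t)
    linarith
  have hQnes : ∀ z ∈ sphere (0:ℂ) 1, Q z ≠ 0 := by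
    intro z hz h0
    have h1 := hQclose z (sphere_subset_closedBall hz)
    have h2 := hFms z hz
    rw [h0, zero_sub] at h1
    simp only [norm_neg] at h1
    linarith
  -- polynomial with root a
  set Qp : Polynomial ℂ := P - Polynomial.C (P.eval a) with hQp
  have hQpeval : ∀ z : ℂ, Qp.eval z = Q z := by
    intro z
    rw [hQp, hQ]
    simp
  have hQp0 : Qp ≠ 0 := by
    intro h0
    apply hQnes 1 (by simp)
    rw [← hQpeval 1, h0]
    simp
  have haroot : a ∈ Qp.roots := by
    rw [Polynomial.mem_roots hQp0]
    rw [Polynomial.IsRoot, hQpeval a, hQ]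
    simp
  have hroots1 : ∀ b ∈ Qp.roots, ‖b‖ ≠ 1 := by
    intro b hb h1
    apply hQnes b (by rw [mem_sphere_zero_iff_norm]; exact h1)
    rw [← hQpeval b]
    exact (Polynomial.mem_roots'.1 hb).2
  have hsplit := (IsAlgClosed.splits Qp).eq_prod_roots
  have hQfact : ∀ z : ℂ, Q z = Qp.leadingCoeff * ((Qp.roots.map fun b => z - b)).prod := by
    intro z
    rw [← hQpeval z]
    conv_lhs => rw [hsplit]
    rw [Polynomial.eval_mul, Polynomial.eval_C, Polynomial.eval_multiset_prod, Multiset.map_map]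
    simp only [Function.comp_apply, Polynomial.eval_sub, Polynomial.eval_X, Polynomial.eval_C]
  have hwk := winding_prod Qp.leadingCoeff Qp.roots hroots1
  have hwQk : HasWindingNumber Q ((Qp.roots.filter (fun b => ‖b‖ < 1)).card : ℤ) :=
    winding_congr (fun t => (hQfact _).symm) hwk
  have hQneloop : ∀ t : ℝ, Q (𝕖 t) ≠ 0 := fun t => hQnes _ (hEmem t)
  have huniq := winding_unique hQneloop hwQ hwQk
  have hcard : 0 < (Qp.roots.filter (fun b => ‖b‖ < 1)).card := by
    rw [Multiset.card_pos_iff_exists_mem]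
    exact ⟨a, Multiset.mem_filter.2 ⟨haroot, ha1⟩⟩
  omega
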